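/- Let μ be a non-atomic Borel probability measure whose topological support is exactly F, where F is a fractal subset of [0,1] satisfying the lacunarity condition with constant λ ∈ (0,1], and let a ≥ 2/λ and q ∈ ℝ. Then β(q) = inf{ β ∈ ℝ : limsup_{N→∞} ( Σ_{n=1}^N μ(Ī_n^a)^q |I_n|^β ) / log N = 0 }, where β(q) := inf{ β ∈ ℝ : limsup_{r→0⁺} r^β Σ_{B ∈ B_r^*} μ(B̄^a)^q = 0 }. -/

import Mathlib

open MeasureTheory Filter Set
open scoped Classical

noncomputable section

/-- The enlargement `B̄^a` of the interval `[s,t]` by the factor `1+a` about its centre. -/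
def enlarge (a s t : ℝ) : Set ℝ :=
  Set.Icc (s - a * (t - s) / 2) (t + a * (t - s) / 2)

/-- The moment sum `Σ_{B ∈ B_r^*} μ(B̄^a)^q` over grid intervals of length `r`
whose interior meets the support of `μ` (i.e. with `μ(B) > 0`). -/
def gridSum (μ : Measure ℝ) (a q R : ℝ) : ℝ :=
  ∑' m : ℤ, if 0 < μ (Set.Icc ((m : ℝ) * R) (((m : ℝ) + 1) * R))
    then (μ (enlarge a ((m : ℝ) * R) (((m : ℝ) + 1) * R))).toReal ^ q else 0

/-- The coarse multifractal moment function
`β_a(q) = inf{β : limsup_{r→0⁺} r^β Σ_{B ∈ B_r^*} μ(B̄^a)^q = 0}`.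
(For the nonnegative quantity `r^β · Σ…`, vanishing of the `limsup` as `r → 0⁺`
is the same as convergence to `0`.) -/
def betaA (μ : Measure ℝ) (a q : ℝ) : ℝ :=
  sInf {β : ℝ | Filter.Tendsto (fun R => R ^ β * gridSum μ a q R)
    (nhdsWithin 0 (Set.Ioi 0)) (nhds 0)}

/-- `F` is a "fractal subset" of `[0,1]`: compact, Lebesgue-null, containing `0` and `1`. -/
def IsFractalSubset (F : Set ℝ) : Prop :=
  IsCompact F ∧ F ⊆ Set.Icc 0 1 ∧ (0 : ℝ) ∈ F ∧ (1 : ℝ) ∈ F ∧ MeasureTheory.volume F = 0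

/-- The complementary intervals `I_n = (l n, r n)` of `F` in `[0,1]`, enumerated with
nonincreasing lengths. -/
structure FractalComplement (F : Set ℝ) where
  l : ℕ → ℝ
  r : ℕ → ℝ
  lt : ∀ n, l n < r n
  disj : Pairwise fun n m => Disjoint (Set.Ioo (l n) (r n)) (Set.Ioo (l m) (r m))
  union : (⋃ n, Set.Ioo (l n) (r n)) = Set.Icc (0 : ℝ) 1 \ F
  mono : ∀ n, r (n + 1) - l (n + 1) ≤ r n - l n

/-- The length `|I_n|` of the `n`-th complementary interval. -/
def FractalComplement.len {F : Set ℝ} (c : FractalComplement F) (n : ℕ) : ℝ := c.r n - c.l n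

/-- The enlargement `Ī_n^a` of the closure of the complementary interval `I_n`. -/
def FractalComplement.I {F : Set ℝ} (c : FractalComplement F) (a : ℝ) (n : ℕ) : Set ℝ :=
  enlarge a (c.l n) (c.r n)

/-- The lacunarity condition with constant `lam`: every interval `[x-r, x+r]` with `x ∈ F`
and `0 < r ≤ 1` contains a complementary interval of length at least `lam * r`. -/
def Lacunary {F : Set ℝ} (c : FractalComplement F) (lam : ℝ) : Prop :=
  ∀ x ∈ F, ∀ R : ℝ, 0 < R → R ≤ 1 → ∃ n,
    Set.Ioo (c.l n) (c.r n) ⊆ Set.Icc (x - R) (x + R) ∧ lam * R ≤ c.len n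

/-- The topological support of `μ` is exactly `F`. -/
def HasSupport (μ : Measure ℝ) (F : Set ℝ) : Prop :=
  μ Fᶜ = 0 ∧ ∀ x ∈ F, ∀ ε : ℝ, 0 < ε → 0 < μ (Set.Ioo (x - ε) (x + ε))

lemma Real.sInf_le_sInf_of_shift {A B : Set ℝ}
    (hAB : ∀ β ∈ A, ∀ ε : ℝ, 0 < ε → β + ε ∈ B)
    (hBA : ∀ β ∈ B, ∀ ε : ℝ, 0 < ε → β + ε ∈ A) : sInf B ≤ sInf A := by
  by_cases hA : A.Nonempty
  · obtain ⟨x0, hx0⟩ := hA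
    have hB : B.Nonempty := ⟨x0 + 1, hAB x0 hx0 1 one_pos⟩
    by_cases hBb : BddBelow B
    · refine le_csInf ⟨x0, hx0⟩ fun x hx => ?_
      have key : ∀ ε : ℝ, 0 < ε → sInf B ≤ x + ε := fun ε hε => csInf_le hBb (hAB x hx ε hε)
      by_contra h
      push_neg at h
      have := key ((sInf B - x) / 2) (by linarith)
      linarith
    · have hAb : ¬ BddBelow A := by
        intro ⟨m, hm⟩
        apply hBb
        refine ⟨m - 1, fun y hy => ?_⟩
        have := hm (hBA y hy 1 one_pos)
        linarith
      rw [Real.sInf_of_not_bddBelow hAb, Real.sInf_of_not_bddBelow hBb]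
  · have hB : ¬ B.Nonempty := fun ⟨b, hb⟩ => hA ⟨b + 1, hBA b hb 1 one_pos⟩
    rw [Set.not_nonempty_iff_eq_empty] at hA hB
    rw [hA, hB]

lemma Ioo_sub_Icc {l r A B : ℝ} (h : l < r) (hs : Set.Ioo l r ⊆ Set.Icc A B) :
    A ≤ l ∧ r ≤ B := by
  constructor
  · by_contra hc
    push_neg at hc
    have h1 : l < min A r := lt_min hc h
    have h2 := hs (⟨by linarith, by linarith [min_le_right A r]⟩ :
      (l + min A r) / 2 ∈ Set.Ioo l r)
    have := min_le_left A r
    linarith [h2.1]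
  · by_contra hc
    push_neg at hc
    have h1 : max B l < r := max_lt hc h
    have h2 := hs (⟨by linarith [le_max_right B l], by linarith⟩ :
      (max B l + r) / 2 ∈ Set.Ioo l r)
    have := le_max_left B l
    linarith [h2.2]

lemma count_disjoint_intervals {ι : Type*} (s : Finset ι) (p q : ι → ℝ) {δ A B : ℝ}
    (hδ : 0 < δ) (hAB : A ≤ B)
    (hlen : ∀ i ∈ s, δ ≤ q i - p i)
    (hsub : ∀ i ∈ s, Set.Ioo (p i) (q i) ⊆ Set.Icc A B)
    (hdisj : (s : Set ι).Pairwise fun i j => Disjoint (Set.Ioo (p i) (q i)) (Set.Ioo (p j) (q j))) :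
    (s.card : ℝ) * δ ≤ B - A := by
  have h2 : ∑ i ∈ s, volume (Set.Ioo (p i) (q i)) ≤ ENNReal.ofReal (B - A) := by
    rw [← measure_biUnion_finset hdisj (fun i _ => measurableSet_Ioo)]
    calc volume (⋃ i ∈ s, Set.Ioo (p i) (q i)) ≤ volume (Set.Icc A B) :=
          measure_mono (Set.iUnion₂_subset hsub)
      _ = ENNReal.ofReal (B - A) := Real.volume_Icc
  have h3 : ENNReal.ofReal ((s.card : ℝ) * δ) ≤ ENNReal.ofReal (B - A) := by
    rw [ENNReal.ofReal_mul (by positivity)]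
    calc ENNReal.ofReal (s.card : ℝ) * ENNReal.ofReal δ
        = ∑ _i ∈ s, ENNReal.ofReal δ := by
          simp [Finset.sum_const, ENNReal.ofReal_natCast, mul_comm]
      _ ≤ ∑ i ∈ s, volume (Set.Ioo (p i) (q i)) := by
          refine Finset.sum_le_sum fun i hi => ?_
          rw [Real.volume_Ioo]
          exact ENNReal.ofReal_le_ofReal (hlen i hi)
      _ ≤ _ := h2
  rwa [ENNReal.ofReal_le_ofReal_iff (by linarith)] at h3

variable {F : Set ℝ} (c : FractalComplement F)

lemma FractalComplement.len_pos (n : ℕ) : 0 < c.len n := sub_pos.2 (c.lt n)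

lemma FractalComplement.gap_subset (n : ℕ) :
    Set.Ioo (c.l n) (c.r n) ⊆ Set.Icc (0:ℝ) 1 \ F := by
  rw [← c.union]; exact Set.subset_iUnion (fun n => Set.Ioo (c.l n) (c.r n)) n

lemma FractalComplement.l_nonneg (n : ℕ) : 0 ≤ c.l n :=
  (Ioo_sub_Icc (c.lt n) ((c.gap_subset n).trans (Set.diff_subset))).1

lemma FractalComplement.r_le_one (n : ℕ) : c.r n ≤ 1 :=
  (Ioo_sub_Icc (c.lt n) ((c.gap_subset n).trans (Set.diff_subset))).2

lemma FractalComplement.l_mem (n : ℕ) : c.l n ∈ F := by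
  by_contra h
  have h01 : c.l n ∈ Set.Icc (0:ℝ) 1 :=
    ⟨c.l_nonneg n, le_trans (c.lt n).le (c.r_le_one n)⟩
  have hmem : c.l n ∈ ⋃ m, Set.Ioo (c.l m) (c.r m) := by
    rw [c.union]; exact ⟨h01, h⟩
  obtain ⟨m, hm⟩ := Set.mem_iUnion.1 hmem
  have hne : m ≠ n := by
    rintro rfl
    exact lt_irrefl (c.l m) hm.1
  set z := (c.l n + min (c.r n) (c.r m)) / 2 with hz
  have hln : c.l n < min (c.r n) (c.r m) := lt_min (c.lt n) hm.2
  have hz1 : z ∈ Set.Ioo (c.l m) (c.r m) :=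
    ⟨by have := hm.1; simp only [hz]; linarith,
     by have := min_le_right (c.r n) (c.r m); simp only [hz]; linarith⟩
  have hz2 : z ∈ Set.Ioo (c.l n) (c.r n) :=
    ⟨by simp only [hz]; linarith,
     by have := min_le_left (c.r n) (c.r m); simp only [hz]; linarith⟩
  exact Set.disjoint_left.1 (c.disj hne) hz1 hz2

lemma FractalComplement.sum_len_le_one (s : Finset ℕ) : ∑ n ∈ s, c.len n ≤ 1 := by
  have h2 : ∑ n ∈ s, volume (Set.Ioo (c.l n) (c.r n)) ≤ ENNReal.ofReal 1 := by
    rw [← measure_biUnion_finset (fun i _ j _ hij => c.disj hij)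
      (fun i _ => measurableSet_Ioo)]
    calc volume (⋃ n ∈ s, Set.Ioo (c.l n) (c.r n)) ≤ volume (Set.Icc (0:ℝ) 1) := by
          refine measure_mono (Set.iUnion₂_subset fun n _ => ?_)
          exact (c.gap_subset n).trans (Set.diff_subset)
      _ = ENNReal.ofReal (1 - 0) := Real.volume_Icc
      _ = ENNReal.ofReal 1 := by norm_num
  have h3 : ENNReal.ofReal (∑ n ∈ s, c.len n) ≤ ENNReal.ofReal 1 := by
    rw [ENNReal.ofReal_sum_of_nonneg (fun n _ => (c.len_pos n).le)]
    simpa [Real.volume_Ioo, FractalComplement.len] using h2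
  rwa [ENNReal.ofReal_le_ofReal_iff one_pos.le] at h3

lemma FractalComplement.len_antitone : Antitone c.len :=
  antitone_nat_of_succ_le fun n => c.mono n

lemma FractalComplement.len_le_inv (n : ℕ) : ((n : ℝ) + 1) * c.len n ≤ 1 := by
  calc ((n : ℝ) + 1) * c.len n = ∑ _k ∈ Finset.range (n + 1), c.len n := by
        simp [Finset.sum_const, mul_comm]
    _ ≤ ∑ k ∈ Finset.range (n + 1), c.len k := by
        refine Finset.sum_le_sum fun k hk => ?_
        exact c.len_antitone (Nat.lt_succ_iff.1 (Finset.mem_range.1 hk))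
    _ ≤ 1 := c.sum_len_le_one _

/-- If `w ≤ len n` then `n < ⌈1/w⌉₊`. -/
lemma FractalComplement.index_lt {w : ℝ} (hw : 0 < w) {n : ℕ} (hn : w ≤ c.len n) :
    n < ⌈1 / w⌉₊ := by
  have h1 := c.len_le_inv n
  have h2 : ((n : ℝ) + 1) * w ≤ 1 := le_trans (by nlinarith [c.len_pos n]) h1
  have h3 : (n : ℝ) < 1 / w := by
    rw [lt_div_iff₀ hw]; nlinarith
  exact Nat.lt_ceil.2 h3

/-- The summand of `gridSum`. -/
def gfun (μ : Measure ℝ) (a q R : ℝ) (m : ℤ) : ℝ :=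
  if 0 < μ (Set.Icc ((m : ℝ) * R) (((m : ℝ) + 1) * R))
    then (μ (enlarge a ((m : ℝ) * R) (((m : ℝ) + 1) * R))).toReal ^ q else 0

lemma gridSum_eq_tsum (μ : Measure ℝ) (a q R : ℝ) : gridSum μ a q R = ∑' m, gfun μ a q R m :=
  rfl

lemma gfun_nonneg (μ : Measure ℝ) (a q R : ℝ) (m : ℤ) : 0 ≤ gfun μ a q R m := by
  unfold gfun
  split
  · exact Real.rpow_nonneg ENNReal.toReal_nonneg q
  · exact le_refl 0

section MeasureFacts

variable {F : Set ℝ} {μ : Measure ℝ} [IsProbabilityMeasure μ]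

lemma gfun_eq_zero_of_far (hFsub : F ⊆ Set.Icc 0 1) (hsupp : HasSupport μ F)
    {R : ℝ} (hR : 0 < R) {m : ℤ} (hm : m ∉ Finset.Icc (-1 : ℤ) (⌊1/R⌋ + 1)) :
    gfun μ a q R m = 0 := by
  have hdisj : Set.Icc ((m : ℝ) * R) (((m : ℝ) + 1) * R) ⊆ Fᶜ := by
    intro y hy hyF
    have h01 := hFsub hyF
    simp only [Finset.mem_Icc, not_and_or, not_le] at hm
    rcases hm with hm | hm
    · have hm2 : m ≤ -2 := by omega
      have : (m : ℝ) ≤ -2 := by exact_mod_cast hm2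
      have : ((m : ℝ) + 1) * R ≤ -R := by nlinarith
      have := hy.2
      have := h01.1
      linarith
    · have hm' : ⌊1/R⌋ + 2 ≤ m := by omega
      have hm2 : ((⌊1/R⌋ : ℝ) + 2) ≤ (m : ℝ) := by exact_mod_cast hm'
      have hfl : 1/R - 1 < (⌊1/R⌋ : ℝ) := by linarith [Int.sub_one_lt_floor (1/R)]
      have : (m : ℝ) * R > 1 := by
        have h1 : (1/R + 1) * R ≤ (m : ℝ) * R := by nlinarith
        have : (1/R) * R = 1 := by field_simp
        nlinarith
      have := hy.1
      have := h01.2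
      linarith
  have : μ (Set.Icc ((m : ℝ) * R) (((m : ℝ) + 1) * R)) = 0 :=
    le_antisymm (le_trans (measure_mono hdisj) hsupp.1.le) zero_le
  unfold gfun
  simp [this]

lemma gfun_summable (hFsub : F ⊆ Set.Icc 0 1) (hsupp : HasSupport μ F)
    {R : ℝ} (hR : 0 < R) (a q : ℝ) : Summable (gfun μ a q R) :=
  summable_of_ne_finset_zero (s := Finset.Icc (-1 : ℤ) (⌊1/R⌋ + 1))
    (fun m hm => gfun_eq_zero_of_far hFsub hsupp hR hm)

lemma sum_gfun_le (hFsub : F ⊆ Set.Icc 0 1) (hsupp : HasSupport μ F)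
    {R : ℝ} (hR : 0 < R) (a q : ℝ) (s : Finset ℤ) :
    ∑ m ∈ s, gfun μ a q R m ≤ gridSum μ a q R := by
  rw [gridSum_eq_tsum]
  exact Summable.sum_le_tsum s (fun m _ => gfun_nonneg μ a q R m)
    (gfun_summable hFsub hsupp hR a q)

lemma gridSum_eq_sum (hFsub : F ⊆ Set.Icc 0 1) (hsupp : HasSupport μ F)
    {R : ℝ} (hR : 0 < R) (a q : ℝ) :
    gridSum μ a q R = ∑ m ∈ Finset.Icc (-1 : ℤ) (⌊1/R⌋ + 1), gfun μ a q R m := by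
  rw [gridSum_eq_tsum]
  exact tsum_eq_sum (fun m hm => gfun_eq_zero_of_far hFsub hsupp hR hm)

lemma gridSum_nonneg (μ : Measure ℝ) (a q R : ℝ) : 0 ≤ gridSum μ a q R := by
  rw [gridSum_eq_tsum]
  exact tsum_nonneg (gfun_nonneg μ a q R)

end MeasureFacts
lemma grid_Ioo_disjoint {R : ℝ} (hR : 0 < R) {m m' : ℤ} (h : m ≠ m') :
    Disjoint (Set.Ioo ((m:ℝ)*R) (((m:ℝ)+1)*R)) (Set.Ioo ((m':ℝ)*R) (((m':ℝ)+1)*R)) := by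
  rcases lt_or_gt_of_ne h with hlt | hlt
  · have : ((m:ℝ)+1) ≤ (m':ℝ) := by exact_mod_cast hlt
    refine Set.disjoint_left.2 fun y hy hy' => ?_
    have h1 : y < ((m:ℝ)+1)*R := hy.2
    have h2 : (m':ℝ)*R < y := hy'.1
    nlinarith
  · have : ((m':ℝ)+1) ≤ (m:ℝ) := by exact_mod_cast hlt
    refine Set.disjoint_left.2 fun y hy hy' => ?_
    have h1 : y < ((m':ℝ)+1)*R := hy'.2
    have h2 : (m:ℝ)*R < y := hy.1
    nlinarith

section Assembly

variable {F : Set ℝ} (c : FractalComplement F) {μ : Measure ℝ} [IsProbabilityMeasure μ]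

lemma key_assembly (hFsub : F ⊆ Set.Icc 0 1) (hsupp : HasSupport μ F)
    (a q : ℝ) {w W ρc K R : ℝ} (hw : 0 < w) (hρc : 0 < ρc) (hR : 0 < R)
    (hKc : 2*ρc + 2 ≤ K)
    (hsel : ∀ m : ℤ, 0 < μ (Set.Icc ((m:ℝ) * R) (((m:ℝ) + 1) * R)) → ∃ n : ℕ,
      gfun μ a q R m ≤ (μ (c.I a n)).toReal ^ q ∧ w*R ≤ c.len n ∧ c.len n ≤ W*R ∧
      (m:ℝ)*R - ρc*R ≤ c.l n ∧ c.r n ≤ ((m:ℝ)+1)*R + ρc*R) :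
    gridSum μ a q R ≤ K * ∑ n ∈ (Finset.range ⌈1/(w*R)⌉₊).filter
      (fun n => w*R ≤ c.len n ∧ c.len n ≤ W*R), (μ (c.I a n)).toReal ^ q := by
  classical
  set t : ℕ → ℝ := fun n => (μ (c.I a n)).toReal ^ q with ht
  have htn : ∀ n, 0 ≤ t n := fun n => Real.rpow_nonneg ENNReal.toReal_nonneg q
  set Q : ℤ → ℕ → Prop := fun m n =>
      gfun μ a q R m ≤ t n ∧ w*R ≤ c.len n ∧ c.len n ≤ W*R ∧
      (m:ℝ)*R - ρc*R ≤ c.l n ∧ c.r n ≤ ((m:ℝ)+1)*R + ρc*R with hQ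
  set φ : ℤ → ℕ := fun m => if h : ∃ n, Q m n then h.choose else 0 with hφdef
  set s0 := Finset.Icc (-1 : ℤ) (⌊1/R⌋ + 1) with hs0
  set s' := s0.filter (fun m : ℤ => 0 < μ (Set.Icc ((m:ℝ) * R) (((m:ℝ) + 1) * R))) with hs'
  have hφ : ∀ m ∈ s', Q m (φ m) := by
    intro m hm
    have hpos := (Finset.mem_filter.1 hm).2
    have hex : ∃ n, Q m n := hsel m hpos
    simp only [hφdef, dif_pos hex]
    exact hex.choose_spec
  have hK0 : 0 ≤ K := by linarith
  have step1 : gridSum μ a q R = ∑ m ∈ s0, gfun μ a q R m :=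
    gridSum_eq_sum hFsub hsupp hR a q
  have step2 : ∑ m ∈ s0, gfun μ a q R m = ∑ m ∈ s', gfun μ a q R m := by
    refine (Finset.sum_filter_of_ne fun m _ hne => ?_).symm
    by_contra h
    exact hne (by unfold gfun; exact if_neg h)
  have step3 : ∑ m ∈ s', gfun μ a q R m ≤ ∑ m ∈ s', t (φ m) :=
    Finset.sum_le_sum fun m hm => (hφ m hm).1
  have step4 : ∑ m ∈ s', t (φ m)
      = ∑ n ∈ s'.image φ, ∑ m ∈ s'.filter (fun m => φ m = n), t (φ m) :=
    (Finset.sum_fiberwise_of_maps_to (fun m hm => Finset.mem_image_of_mem φ hm) _).symm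
  have step5 : ∀ n ∈ s'.image φ,
      ∑ m ∈ s'.filter (fun m => φ m = n), t (φ m) ≤ K * t n := by
    intro n _
    have hsum : ∑ m ∈ s'.filter (fun m => φ m = n), t (φ m)
        = ∑ m ∈ s'.filter (fun m => φ m = n), t n := by
      refine Finset.sum_congr rfl fun m hm => ?_
      rw [(Finset.mem_filter.1 hm).2]
    rw [hsum, Finset.sum_const, nsmul_eq_mul]
    have hQn : ∀ m ∈ s'.filter (fun m => φ m = n), Q m n := by
      intro m hm
      have h1 := hφ m (Finset.mem_filter.1 hm).1
      rwa [(Finset.mem_filter.1 hm).2] at h1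
    have hcard : ((s'.filter (fun m => φ m = n)).card : ℝ) * R
        ≤ (c.l n + ρc*R + R) - (c.l n - ρc*R - R) := by
      refine count_disjoint_intervals _ (fun m : ℤ => (m:ℝ)*R) (fun m : ℤ => ((m:ℝ)+1)*R)
        hR (by nlinarith) (fun m _ => by ring_nf; linarith) ?_ ?_
      · intro m hm
        obtain ⟨_, _, _, h4, h5⟩ := hQn m hm
        have hlr := (c.lt n).le
        intro y hy
        have hy1 : (m:ℝ)*R < y := hy.1
        have hy2 : y < ((m:ℝ)+1)*R := hy.2
        constructor
        · have : (m:ℝ)*R ≥ c.l n - ρc*R - R := by linarith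
          linarith
        · have : ((m:ℝ)+1)*R ≤ c.l n + ρc*R + R := by linarith
          linarith
      · intro m hm m' hm' hne
        exact grid_Ioo_disjoint hR hne
    have hcard2 : ((s'.filter (fun m => φ m = n)).card : ℝ) ≤ K := by
      have h2 : ((s'.filter (fun m => φ m = n)).card : ℝ) * R ≤ K * R := by
        calc ((s'.filter (fun m => φ m = n)).card : ℝ) * R
            ≤ (c.l n + ρc*R + R) - (c.l n - ρc*R - R) := hcard
          _ = (2*ρc + 2) * R := by ring
          _ ≤ K * R := by nlinarith
      exact le_of_mul_le_mul_right h2 hR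
    exact mul_le_mul_of_nonneg_right hcard2 (htn n)
  have step6 : ∑ n ∈ s'.image φ, K * t n ≤ K * ∑ n ∈ (Finset.range ⌈1/(w*R)⌉₊).filter
      (fun n => w*R ≤ c.len n ∧ c.len n ≤ W*R), t n := by
    rw [← Finset.mul_sum]
    refine mul_le_mul_of_nonneg_left ?_ hK0
    refine Finset.sum_le_sum_of_subset_of_nonneg ?_ (fun n _ _ => htn n)
    intro n hn
    obtain ⟨m, hm, hmn⟩ := Finset.mem_image.1 hn
    have hq := hφ m hm
    rw [hmn] at hq
    obtain ⟨_, h2, h3, _, _⟩ := hq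
    refine Finset.mem_filter.2 ⟨Finset.mem_range.2 (c.index_lt (by positivity) h2), h2, h3⟩
  calc gridSum μ a q R = ∑ m ∈ s', gfun μ a q R m := by rw [step1, step2]
    _ ≤ ∑ m ∈ s', t (φ m) := step3
    _ = ∑ n ∈ s'.image φ, ∑ m ∈ s'.filter (fun m => φ m = n), t (φ m) := step4
    _ ≤ ∑ n ∈ s'.image φ, K * t n := Finset.sum_le_sum step5
    _ ≤ _ := step6

end Assembly
section Key1

variable {F : Set ℝ} (c : FractalComplement F) {μ : Measure ℝ} [IsProbabilityMeasure μ]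

lemma FractalComplement.I_pos (hsupp : HasSupport μ F) {a : ℝ} (ha2 : 2 ≤ a) (n : ℕ) :
    0 < μ (c.I a n) := by
  have hlen := c.len_pos n
  unfold FractalComplement.len at hlen
  refine lt_of_lt_of_le (hsupp.2 (c.l n) (c.l_mem n) (c.len n) (c.len_pos n))
    (measure_mono ?_)
  intro y hy
  have hy1 := hy.1
  have hy2 := hy.2
  unfold FractalComplement.len at hy1 hy2
  unfold FractalComplement.I enlarge
  constructor
  · nlinarith
  · nlinarith

lemma mem_F_of_pos_box (hsupp : HasSupport μ F) {s : Set ℝ}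
    (hm : 0 < μ s) : (F ∩ s).Nonempty := by
  by_contra h
  rw [Set.not_nonempty_iff_eq_empty] at h
  have hsub : s ⊆ Fᶜ := by
    intro y hy hyF
    exact Set.eq_empty_iff_forall_notMem.1 h y ⟨hyF, hy⟩
  exact absurd (le_antisymm (le_trans (measure_mono hsub) hsupp.1.le) zero_le)
    (ne_of_gt hm)

lemma key1 (hFsub : F ⊆ Set.Icc 0 1) (hsupp : HasSupport μ F)
    {lam a : ℝ} (hlam0 : 0 < lam) (hlam1 : lam ≤ 1) (hlac : Lacunary c lam)
    (ha : 2 / lam ≤ a) (q : ℝ) :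
    ∃ w W K R₀ : ℝ, 0 < w ∧ 0 < W ∧ 0 < R₀ ∧ 0 ≤ K ∧ ∀ R, 0 < R → R ≤ R₀ →
      gridSum μ a q R ≤ K * ∑ n ∈ (Finset.range ⌈1/(w*R)⌉₊).filter
        (fun n => w*R ≤ c.len n ∧ c.len n ≤ W*R), (μ (c.I a n)).toReal ^ q := by
  have halam : 2 ≤ a * lam := by rwa [div_le_iff₀ hlam0] at ha
  have ha0 : 0 < a := by nlinarith
  have ha2 : 2 ≤ a := by nlinarith
  rcases le_or_gt 0 q with hq | hq
  · -- q ≥ 0 : enlarged box is contained in enlarged gap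
    set ρc := (2+a)/(2*lam) with hρcdef
    have hρc : 0 < ρc := by positivity
    refine ⟨(2+a)/2, 2*ρc, 2*ρc+2, 1/ρc, by positivity, by positivity, by positivity,
      by positivity, ?_⟩
    intro R hR hRle
    refine key_assembly c hFsub hsupp a q (by positivity) hρc hR le_rfl ?_
    intro m hm
    obtain ⟨x, hxF, hx1, hx2⟩ : ∃ x, x ∈ F ∧ (m:ℝ)*R ≤ x ∧ x ≤ ((m:ℝ)+1)*R := by
      obtain ⟨x, hxF, hxs⟩ := mem_F_of_pos_box hsupp hm
      exact ⟨x, hxF, hxs.1, hxs.2⟩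
    set ρ := ρc * R with hρdef
    have hρpos : 0 < ρ := by positivity
    have hρ1 : ρ ≤ 1 := by
      rw [hρdef]
      calc ρc * R ≤ ρc * (1/ρc) := by
            exact mul_le_mul_of_nonneg_left hRle hρc.le
        _ = 1 := by field_simp
    obtain ⟨n, hsub, hlen⟩ := hlac x hxF ρ hρpos hρ1
    obtain ⟨hl, hrr⟩ := Ioo_sub_Icc (c.lt n) hsub
    have hlamρ : lam * ρ = R + a*R/2 := by
      rw [hρdef, hρcdef]; field_simp
    have hlen' : c.len n = c.r n - c.l n := rfl
    have hlen2 : c.len n ≤ 2*ρ := by rw [hlen']; linarith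
    have h1 : (2+a)*(lam*ρ) ≤ (2+a)*(c.len n) :=
      mul_le_mul_of_nonneg_left hlen (by linarith)
    have h2 : 2*ρ ≤ a*lam*ρ := by
      calc 2*ρ ≤ (a*lam)*ρ := mul_le_mul_of_nonneg_right halam hρpos.le
        _ = a*lam*ρ := by ring
    have hbox : enlarge a ((m:ℝ)*R) (((m:ℝ)+1)*R)
        = Set.Icc ((m:ℝ)*R - a*R/2) (((m:ℝ)+1)*R + a*R/2) := by
      unfold enlarge; congr 1 <;> ring
    refine ⟨n, ?_, ?_, ?_, ?_, ?_⟩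
    · unfold gfun
      rw [if_pos hm]
      refine Real.rpow_le_rpow ENNReal.toReal_nonneg ?_ hq
      refine ENNReal.toReal_mono (measure_ne_top μ _) (measure_mono ?_)
      rw [hbox]
      unfold FractalComplement.I enlarge
      refine Set.Icc_subset_Icc ?_ ?_
      · rw [← hlen']; linarith
      · rw [← hlen']; linarith
    · rw [hlen']; linarith
    · rw [hlen']; linarith
    · linarith
    · linarith
  · -- q < 0 : enlarged gap is contained in enlarged box
    set ρc := a/(2*(1+a)) with hρcdef
    have h1a : (0:ℝ) < 1 + a := by linarith
    have hρc : 0 < ρc := by positivity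
    refine ⟨lam*a/(2*(1+a)), 2*ρc, 2*ρc+2, 1/ρc, by positivity, by positivity,
      by positivity, by positivity, ?_⟩
    intro R hR hRle
    refine key_assembly c hFsub hsupp a q (by positivity) hρc hR le_rfl ?_
    intro m hm
    obtain ⟨x, hxF, hx1, hx2⟩ : ∃ x, x ∈ F ∧ (m:ℝ)*R ≤ x ∧ x ≤ ((m:ℝ)+1)*R := by
      obtain ⟨x, hxF, hxs⟩ := mem_F_of_pos_box hsupp hm
      exact ⟨x, hxF, hxs.1, hxs.2⟩
    set ρ := ρc * R with hρdef
    have hρpos : 0 < ρ := by positivity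
    have hρ1 : ρ ≤ 1 := by
      rw [hρdef]
      calc ρc * R ≤ ρc * (1/ρc) := mul_le_mul_of_nonneg_left hRle hρc.le
        _ = 1 := by field_simp
    obtain ⟨n, hsub, hlen⟩ := hlac x hxF ρ hρpos hρ1
    obtain ⟨hl, hrr⟩ := Ioo_sub_Icc (c.lt n) hsub
    have hρeq : ρ*(1+a) = a*R/2 := by
      rw [hρdef, hρcdef]; field_simp
    have hlen' : c.len n = c.r n - c.l n := rfl
    have hlen2 : c.len n ≤ 2*ρ := by rw [hlen']; linarith
    have h3 : a*(c.len n) ≤ a*(2*ρ) := mul_le_mul_of_nonneg_left hlen2 ha0.le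
    have hbox : enlarge a ((m:ℝ)*R) (((m:ℝ)+1)*R)
        = Set.Icc ((m:ℝ)*R - a*R/2) (((m:ℝ)+1)*R + a*R/2) := by
      unfold enlarge; congr 1 <;> ring
    have hIpos : 0 < (μ (c.I a n)).toReal :=
      ENNReal.toReal_pos (ne_of_gt (c.I_pos hsupp ha2 n)) (measure_ne_top μ _)
    refine ⟨n, ?_, ?_, ?_, ?_, ?_⟩
    · unfold gfun
      rw [if_pos hm]
      refine Real.rpow_le_rpow_of_nonpos hIpos ?_ hq.le
      refine ENNReal.toReal_mono (measure_ne_top μ _) (measure_mono ?_)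
      rw [hbox]
      unfold FractalComplement.I enlarge
      refine Set.Icc_subset_Icc ?_ ?_
      · rw [← hlen']; linarith
      · rw [← hlen']; linarith
    · have : lam*a/(2*(1+a))*R = lam*ρ := by rw [hρdef, hρcdef]; ring
      rw [this]; exact hlen
    · rw [hlen']; linarith
    · linarith
    · linarith
end Key1
section Key2

variable {F : Set ℝ} (c : FractalComplement F) {μ : Measure ℝ} [IsProbabilityMeasure μ]

lemma key2_assembly (hFsub : F ⊆ Set.Icc 0 1) (hsupp : HasSupport μ F) (a q : ℝ)
    {cw D C0 R : ℝ} (hcw : 0 < cw) (hR : 0 < R) (hD : 0 ≤ D) (hC0 : 0 ≤ C0)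
    (s : Finset ℕ)
    (hlow : ∀ n ∈ s, cw*R ≤ c.len n)
    (hsel : ∀ n ∈ s, ∃ m : ℤ, (μ (c.I a n)).toReal ^ q ≤ C0 * gfun μ a q R m ∧
      (m:ℝ)*R - D*R ≤ c.l n ∧ c.l n ≤ (m:ℝ)*R + D*R) :
    ∑ n ∈ s, (μ (c.I a n)).toReal ^ q
      ≤ ((2*D + cw)/cw) * C0 * gridSum μ a q R := by
  classical
  set t : ℕ → ℝ := fun n => (μ (c.I a n)).toReal ^ q with ht
  set Q : ℕ → ℤ → Prop := fun n m => t n ≤ C0 * gfun μ a q R m ∧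
      (m:ℝ)*R - D*R ≤ c.l n ∧ c.l n ≤ (m:ℝ)*R + D*R with hQ
  set φ : ℕ → ℤ := fun n => if h : ∃ m, Q n m then h.choose else 0 with hφdef
  have hφ : ∀ n ∈ s, Q n (φ n) := by
    intro n hn
    have hex : ∃ m, Q n m := hsel n hn
    simp only [hφdef, dif_pos hex]
    exact hex.choose_spec
  have hKm : (0:ℝ) ≤ (2*D + cw)/cw := by positivity
  have step3 : ∑ n ∈ s, t n ≤ ∑ n ∈ s, C0 * gfun μ a q R (φ n) :=
    Finset.sum_le_sum fun n hn => (hφ n hn).1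
  have step4 : ∑ n ∈ s, C0 * gfun μ a q R (φ n)
      = C0 * ∑ m ∈ s.image φ, ∑ n ∈ s.filter (fun n => φ n = m), gfun μ a q R (φ n) := by
    rw [Finset.sum_fiberwise_of_maps_to (fun n hn => Finset.mem_image_of_mem φ hn), Finset.mul_sum]
  have step5 : ∀ m ∈ s.image φ,
      ∑ n ∈ s.filter (fun n => φ n = m), gfun μ a q R (φ n)
        ≤ ((2*D + cw)/cw) * gfun μ a q R m := by
    intro m _
    have hsum : ∑ n ∈ s.filter (fun n => φ n = m), gfun μ a q R (φ n)
        = ∑ n ∈ s.filter (fun n => φ n = m), gfun μ a q R m := by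
      refine Finset.sum_congr rfl fun n hn => ?_
      rw [(Finset.mem_filter.1 hn).2]
    rw [hsum, Finset.sum_const, nsmul_eq_mul]
    have hQn : ∀ n ∈ s.filter (fun n => φ n = m), Q n m := by
      intro n hn
      have h1 := hφ n (Finset.mem_filter.1 hn).1
      rwa [(Finset.mem_filter.1 hn).2] at h1
    have hcard : (((s.filter (fun n => φ n = m)).card : ℝ)) * (cw*R)
        ≤ ((m:ℝ)*R + D*R + cw*R) - ((m:ℝ)*R - D*R) := by
      refine count_disjoint_intervals _ (fun n : ℕ => c.l n) (fun n : ℕ => c.l n + cw*R)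
        (by positivity) (by nlinarith) (fun n _ => by ring_nf; nlinarith) ?_ ?_
      · intro n hn
        obtain ⟨_, h4, h5⟩ := hQn n hn
        intro y hy
        have hy1 : c.l n < y := hy.1
        have hy2 : y < c.l n + cw*R := hy.2
        exact ⟨by linarith, by linarith⟩
      · intro n hn n' hn' hne
        have hsub1 : Set.Ioo (c.l n) (c.l n + cw*R) ⊆ Set.Ioo (c.l n) (c.r n) := by
          apply Set.Ioo_subset_Ioo le_rfl
          have := hlow n (Finset.mem_filter.1 hn).1
          have hlen' : c.len n = c.r n - c.l n := rfl
          rw [hlen'] at this; linarith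
        have hsub2 : Set.Ioo (c.l n') (c.l n' + cw*R) ⊆ Set.Ioo (c.l n') (c.r n') := by
          apply Set.Ioo_subset_Ioo le_rfl
          have := hlow n' (Finset.mem_filter.1 hn').1
          have hlen' : c.len n' = c.r n' - c.l n' := rfl
          rw [hlen'] at this; linarith
        exact Disjoint.mono hsub1 hsub2 (c.disj hne)
    have hcard2 : (((s.filter (fun n => φ n = m)).card : ℝ)) ≤ (2*D + cw)/cw := by
      rw [le_div_iff₀ hcw]
      calc ((s.filter (fun n => φ n = m)).card : ℝ) * cw
          = (((s.filter (fun n => φ n = m)).card : ℝ) * (cw * R)) / R := by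
            field_simp
        _ ≤ (((m:ℝ)*R + D*R + cw*R) - ((m:ℝ)*R - D*R)) / R := by
            exact div_le_div_of_nonneg_right hcard hR.le
        _ = 2*D + cw := by field_simp; ring
    exact mul_le_mul_of_nonneg_right hcard2 (gfun_nonneg μ a q R m)
  calc ∑ n ∈ s, t n ≤ ∑ n ∈ s, C0 * gfun μ a q R (φ n) := step3
    _ = C0 * ∑ m ∈ s.image φ, ∑ n ∈ s.filter (fun n => φ n = m), gfun μ a q R (φ n) := step4
    _ ≤ C0 * ∑ m ∈ s.image φ, ((2*D + cw)/cw) * gfun μ a q R m :=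
        mul_le_mul_of_nonneg_left (Finset.sum_le_sum step5) hC0
    _ = ((2*D + cw)/cw) * C0 * ∑ m ∈ s.image φ, gfun μ a q R m := by
        rw [← Finset.mul_sum]; ring
    _ ≤ ((2*D + cw)/cw) * C0 * gridSum μ a q R := by
        refine mul_le_mul_of_nonneg_left ?_ (by positivity)
        exact sum_gfun_le hFsub hsupp hR a q _

end Key2
section Key2b

variable {F : Set ℝ} (c : FractalComplement F) {μ : Measure ℝ} [IsProbabilityMeasure μ]

lemma exists_pos_box_near (hsupp : HasSupport μ F) {R : ℝ} (hR : 0 < R) {x : ℝ}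
    (hx : x ∈ F) :
    ∃ m : ℤ, 0 < μ (Set.Icc ((m:ℝ)*R) (((m:ℝ)+1)*R)) ∧ x - 2*R ≤ (m:ℝ)*R ∧
      (m:ℝ)*R ≤ x + R := by
  set m₀ : ℤ := ⌊x/R⌋ with hm₀
  have hm₀1 : (m₀:ℝ)*R ≤ x := by
    rw [← le_div_iff₀ hR]; exact Int.floor_le (x/R)
  have hm₀2 : x < ((m₀:ℝ)+1)*R := by
    rw [← div_lt_iff₀ hR]; exact_mod_cast Int.lt_floor_add_one (x/R)
  have hcover : Set.Ioo (x - R) (x + R) ⊆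
      Set.Icc (((m₀ - 1 : ℤ):ℝ)*R) ((((m₀ - 1 : ℤ):ℝ)+1)*R) ∪
      (Set.Icc ((m₀:ℝ)*R) (((m₀:ℝ)+1)*R) ∪
       Set.Icc (((m₀ + 1 : ℤ):ℝ)*R) ((((m₀ + 1 : ℤ):ℝ)+1)*R)) := by
    intro y hy
    have hy1 := hy.1
    have hy2 := hy.2
    rcases le_or_gt y ((m₀:ℝ)*R) with h | h
    · left; push_cast; constructor <;> linarith
    · rcases le_or_gt y (((m₀:ℝ)+1)*R) with h' | h'
      · right; left; exact ⟨h.le, h'⟩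
      · right; right; push_cast; constructor <;> linarith
  by_contra hcon
  push_neg at hcon
  have hz : ∀ m : ℤ, x - 2*R ≤ (m:ℝ)*R → (m:ℝ)*R ≤ x + R →
      μ (Set.Icc ((m:ℝ)*R) (((m:ℝ)+1)*R)) = 0 := by
    intro m h1 h2
    by_contra hne
    exact absurd (hcon m (pos_iff_ne_zero.2 hne)) (by push_neg; exact ⟨h1, h2⟩)
  have hz1 : μ (Set.Icc (((m₀ - 1 : ℤ):ℝ)*R) ((((m₀ - 1 : ℤ):ℝ)+1)*R)) = 0 := by
    apply hz <;> push_cast <;> linarith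
  have hz2 : μ (Set.Icc ((m₀:ℝ)*R) (((m₀:ℝ)+1)*R)) = 0 := by
    apply hz <;> push_cast <;> linarith
  have hz3 : μ (Set.Icc (((m₀ + 1 : ℤ):ℝ)*R) ((((m₀ + 1 : ℤ):ℝ)+1)*R)) = 0 := by
    apply hz <;> push_cast <;> linarith
  have hpos := hsupp.2 x hx R hR
  have : μ (Set.Ioo (x - R) (x + R)) = 0 := by
    refine le_antisymm ?_ zero_le
    calc μ (Set.Ioo (x - R) (x + R)) ≤ _ := measure_mono hcover
      _ ≤ _ + _ := measure_union_le _ _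
      _ ≤ _ + (_ + _) := by gcongr; exact measure_union_le _ _
      _ = 0 := by rw [hz1, hz2, hz3]; simp
  exact absurd this (ne_of_gt hpos)

lemma key2 (hFsub : F ⊆ Set.Icc 0 1) (hsupp : HasSupport μ F) {a : ℝ} (ha2 : 2 ≤ a)
    (q : ℝ) :
    ∃ cw K : ℝ, 0 < cw ∧ 0 ≤ K ∧ ∀ R, 0 < R → ∀ s : Finset ℕ,
      (∀ n ∈ s, cw*R ≤ c.len n ∧ c.len n ≤ 2*cw*R) →
      ∑ n ∈ s, (μ (c.I a n)).toReal ^ q ≤ K * gridSum μ a q R := by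
  have ha0 : (0:ℝ) < a := by linarith
  rcases le_or_gt 0 q with hq | hq
  · -- q ≥ 0 : covering argument
    set P : ℝ := 2*(1+a) + 2 with hP
    have hPpos : 0 < P := by positivity
    refine ⟨1, (2*(2+a) + 1)/1 * P^q, one_pos, by positivity, ?_⟩
    intro R hR s hs
    refine key2_assembly c hFsub hsupp a q (cw := 1) (D := 2+a) (C0 := P^q)
      one_pos hR (by linarith) (by positivity) s (fun n hn => (hs n hn).1) ?_
    intro n hn
    obtain ⟨hlow, hhigh⟩ := hs n hn
    rw [one_mul] at hlow
    have hlen' : c.len n = c.r n - c.l n := rfl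
    have hlenpos := c.len_pos n
    set L := c.l n - a*(c.r n - c.l n)/2 with hL
    set T := c.r n + a*(c.r n - c.l n)/2 with hT
    have hIcc : c.I a n = Set.Icc L T := rfl
    have hLT : L ≤ T := by
      rw [hL, hT]; rw [hlen'] at hlenpos; nlinarith
    set bs := Finset.Icc ⌊L/R⌋ ⌊T/R⌋ with hbs
    have hdivR : ∀ u v : ℝ, u ≤ v → u/R ≤ v/R := fun u v h =>
      div_le_div_of_nonneg_right h hR.le
    have hfl : ⌊L/R⌋ ≤ ⌊T/R⌋ := Int.floor_le_floor (hdivR _ _ hLT)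
    have hbsne : bs.Nonempty := Finset.nonempty_Icc.2 hfl
    have hcover : Set.Icc L T ⊆ ⋃ m ∈ bs, Set.Icc ((m:ℝ)*R) (((m:ℝ)+1)*R) := by
      intro y hy
      refine Set.mem_biUnion (Finset.mem_Icc.2 ⟨Int.floor_le_floor (hdivR _ _ hy.1),
        Int.floor_le_floor (hdivR _ _ hy.2)⟩) ?_
      constructor
      · rw [← le_div_iff₀ hR]; exact Int.floor_le (y/R)
      · rw [← div_le_iff₀ hR]
        exact_mod_cast (Int.lt_floor_add_one (y/R)).le
    have hsum : (μ (c.I a n)).toReal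
        ≤ ∑ m ∈ bs, (μ (Set.Icc ((m:ℝ)*R) (((m:ℝ)+1)*R))).toReal := by
      have h1 : μ (c.I a n) ≤ ∑ m ∈ bs, μ (Set.Icc ((m:ℝ)*R) (((m:ℝ)+1)*R)) := by
        calc μ (c.I a n) ≤ μ (⋃ m ∈ bs, Set.Icc ((m:ℝ)*R) (((m:ℝ)+1)*R)) := by
              rw [hIcc]; exact measure_mono hcover
          _ ≤ _ := measure_biUnion_finset_le bs _
      have h2 : ∑ m ∈ bs, μ (Set.Icc ((m:ℝ)*R) (((m:ℝ)+1)*R)) ≠ ⊤ :=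
        ne_of_lt (ENNReal.sum_lt_top.2 fun m _ => measure_lt_top μ _)
      calc (μ (c.I a n)).toReal ≤ (∑ m ∈ bs, μ (Set.Icc ((m:ℝ)*R) (((m:ℝ)+1)*R))).toReal :=
            ENNReal.toReal_mono h2 h1
        _ = _ := ENNReal.toReal_sum fun m _ => measure_ne_top μ _
    obtain ⟨mx, hmxbs, hmax⟩ :=
      Finset.exists_max_image bs (fun m => (μ (Set.Icc ((m:ℝ)*R) (((m:ℝ)+1)*R))).toReal) hbsne
    have hcard : ((bs.card : ℝ)) ≤ P := by
      have hk : (0:ℤ) ≤ ⌊T/R⌋ + 1 - ⌊L/R⌋ := by omega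
      have hcardz : (bs.card : ℤ) = ⌊T/R⌋ + 1 - ⌊L/R⌋ := by
        rw [hbs, Int.card_Icc]
        exact Int.toNat_of_nonneg hk
      have h1 : (bs.card : ℝ) = ((⌊T/R⌋ : ℝ) + 1 - (⌊L/R⌋ : ℝ)) := by
        exact_mod_cast hcardz
      have h2 : (⌊T/R⌋ : ℝ) ≤ T/R := Int.floor_le _
      have h3 : L/R - 1 < (⌊L/R⌋ : ℝ) := Int.sub_one_lt_floor _
      have h4 : T/R - L/R ≤ 2*(1+a) := by
        rw [div_sub_div_same, div_le_iff₀ hR]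
        rw [hT, hL, ← hlen']
        nlinarith
      rw [h1, hP]; linarith
    have hsum2 : (μ (c.I a n)).toReal
        ≤ P * (μ (Set.Icc ((mx:ℝ)*R) (((mx:ℝ)+1)*R))).toReal := by
      calc (μ (c.I a n)).toReal ≤ _ := hsum
        _ ≤ (bs.card : ℝ) * (μ (Set.Icc ((mx:ℝ)*R) (((mx:ℝ)+1)*R))).toReal := by
            have := Finset.sum_le_card_nsmul bs
              (fun m => (μ (Set.Icc ((m:ℝ)*R) (((m:ℝ)+1)*R))).toReal) _
              (fun m hm => hmax m hm)
            rwa [nsmul_eq_mul] at this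
        _ ≤ P * (μ (Set.Icc ((mx:ℝ)*R) (((mx:ℝ)+1)*R))).toReal :=
            mul_le_mul_of_nonneg_right hcard ENNReal.toReal_nonneg
    have hIposR : 0 < (μ (c.I a n)).toReal :=
      ENNReal.toReal_pos (ne_of_gt (c.I_pos hsupp ha2 n)) (measure_ne_top μ _)
    have hmxpos : 0 < μ (Set.Icc ((mx:ℝ)*R) (((mx:ℝ)+1)*R)) := by
      by_contra h
      rw [not_lt, le_zero_iff] at h
      rw [h] at hsum2
      simp at hsum2
      linarith
    have hboxeq : enlarge a ((mx:ℝ)*R) (((mx:ℝ)+1)*R)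
        = Set.Icc ((mx:ℝ)*R - a*R/2) (((mx:ℝ)+1)*R + a*R/2) := by
      unfold enlarge; congr 1 <;> ring
    have hbx1 : L - R < (mx:ℝ)*R := by
      have := Int.sub_one_lt_floor (L/R)
      have h5 : (⌊L/R⌋:ℝ) ≤ (mx:ℝ) := by exact_mod_cast (Finset.mem_Icc.1 hmxbs).1
      have h6 : L/R - 1 < (mx:ℝ) := by linarith
      calc L - R = (L/R - 1) * R := by field_simp
        _ < (mx:ℝ)*R := by exact mul_lt_mul_of_pos_right h6 hR
    have hbx2 : (mx:ℝ)*R ≤ T := by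
      have h5 : (mx:ℝ) ≤ (⌊T/R⌋:ℝ) := by exact_mod_cast (Finset.mem_Icc.1 hmxbs).2
      have h6 : (mx:ℝ) ≤ T/R := le_trans h5 (Int.floor_le _)
      rw [← le_div_iff₀ hR]; exact h6
    refine ⟨mx, ?_, ?_, ?_⟩
    · unfold gfun
      rw [if_pos hmxpos]
      calc (μ (c.I a n)).toReal ^ q
          ≤ (P * (μ (Set.Icc ((mx:ℝ)*R) (((mx:ℝ)+1)*R))).toReal) ^ q :=
            Real.rpow_le_rpow ENNReal.toReal_nonneg hsum2 hq
        _ = P^q * ((μ (Set.Icc ((mx:ℝ)*R) (((mx:ℝ)+1)*R))).toReal)^q :=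
            Real.mul_rpow hPpos.le ENNReal.toReal_nonneg
        _ ≤ P^q * ((μ (enlarge a ((mx:ℝ)*R) (((mx:ℝ)+1)*R))).toReal)^q := by
            refine mul_le_mul_of_nonneg_left ?_ (by positivity)
            refine Real.rpow_le_rpow ENNReal.toReal_nonneg ?_ hq
            refine ENNReal.toReal_mono (measure_ne_top μ _) (measure_mono ?_)
            rw [hboxeq]
            refine Set.Icc_subset_Icc (by nlinarith) (by nlinarith)
    · -- mx*R - (2+a)*R ≤ c.l n
      rw [hT, ← hlen'] at hbx2
      have : c.r n = c.l n + c.len n := by rw [hlen']; ring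
      nlinarith
    · -- c.l n ≤ mx*R + (2+a)*R
      rw [hL, ← hlen'] at hbx1
      nlinarith
  · -- q < 0
    set cw : ℝ := (4+a)/a with hcw
    have hcwpos : 0 < cw := by positivity
    refine ⟨cw, (2*2 + cw)/cw * 1, hcwpos, by positivity, ?_⟩
    intro R hR s hs
    refine key2_assembly c hFsub hsupp a q (cw := cw) (D := 2) (C0 := 1)
      hcwpos hR (by norm_num) zero_le_one s (fun n hn => (hs n hn).1) ?_
    intro n hn
    obtain ⟨hlow, _⟩ := hs n hn
    have hlen' : c.len n = c.r n - c.l n := rfl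
    have hlenpos := c.len_pos n
    obtain ⟨m, hmpos, hmx1, hmx2⟩ := exists_pos_box_near hsupp hR (c.l_mem n)
    have h4 : (4+a)*R ≤ a * c.len n := by
      have := mul_le_mul_of_nonneg_left hlow ha0.le
      calc (4+a)*R = a * (cw * R) := by rw [hcw]; field_simp
        _ ≤ a * c.len n := this
    have hboxeq : enlarge a ((m:ℝ)*R) (((m:ℝ)+1)*R)
        = Set.Icc ((m:ℝ)*R - a*R/2) (((m:ℝ)+1)*R + a*R/2) := by
      unfold enlarge; congr 1 <;> ring
    have hsubI : enlarge a ((m:ℝ)*R) (((m:ℝ)+1)*R) ⊆ c.I a n := by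
      rw [hboxeq]
      unfold FractalComplement.I enlarge
      rw [hlen'] at h4
      refine Set.Icc_subset_Icc (by linarith) (by linarith)
    have hboxpos : 0 < (μ (enlarge a ((m:ℝ)*R) (((m:ℝ)+1)*R))).toReal := by
      refine ENNReal.toReal_pos (ne_of_gt ?_) (measure_ne_top μ _)
      refine lt_of_lt_of_le hmpos (measure_mono ?_)
      rw [hboxeq]
      refine Set.Icc_subset_Icc (by nlinarith) (by nlinarith)
    refine ⟨m, ?_, by linarith, by linarith⟩
    rw [one_mul]
    unfold gfun
    rw [if_pos hmpos]
    refine Real.rpow_le_rpow_of_nonpos hboxpos ?_ hq.le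
    exact ENNReal.toReal_mono (measure_ne_top μ _) (measure_mono hsubI)

end Key2b
lemma rpow_le_max {x u v p : ℝ} (hu : 0 < u) (h1 : u ≤ x) (h2 : x ≤ v) :
    x ^ p ≤ max (u ^ p) (v ^ p) := by
  rcases le_or_gt 0 p with hp | hp
  · exact le_max_of_le_right (Real.rpow_le_rpow (by linarith) h2 hp)
  · exact le_max_of_le_left (Real.rpow_le_rpow_of_nonpos hu h1 hp.le)

lemma rpow_scaled_le {x u v p R : ℝ} (hu : 0 < u) (hv : 0 < v) (hR : 0 < R)
    (h1 : u*R ≤ x) (h2 : x ≤ v*R) :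
    x ^ p ≤ max (u^p) (v^p) * R ^ p := by
  calc x ^ p ≤ max ((u*R)^p) ((v*R)^p) := rpow_le_max (by positivity) h1 h2
    _ ≤ max (u^p) (v^p) * R ^ p := by
      rw [Real.mul_rpow hu.le hR.le, Real.mul_rpow hv.le hR.le]
      refine max_le ?_ ?_
      · exact mul_le_mul_of_nonneg_right (le_max_left _ _) (Real.rpow_nonneg hR.le p)
      · exact mul_le_mul_of_nonneg_right (le_max_right _ _) (Real.rpow_nonneg hR.le p)

lemma tendsto_rpow_nhdsWithin_zero {ε : ℝ} (hε : 0 < ε) :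
    Filter.Tendsto (fun R : ℝ => R ^ ε) (nhdsWithin 0 (Set.Ioi 0)) (nhds 0) := by
  have hlog : Filter.Tendsto (fun R : ℝ => Real.log R * ε) (nhdsWithin 0 (Set.Ioi 0)) atBot :=
    Real.tendsto_log_nhdsGT_zero.atBot_mul_const hε
  have h2 : Filter.Tendsto (fun R : ℝ => Real.exp (Real.log R * ε))
      (nhdsWithin 0 (Set.Ioi 0)) (nhds 0) := Real.tendsto_exp_atBot.comp hlog
  refine h2.congr' ?_
  filter_upwards [self_mem_nhdsWithin] with R (hR : (0:ℝ) < R)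
  rw [Real.rpow_def_of_pos hR]

section P1

variable {F : Set ℝ} (c : FractalComplement F) {μ : Measure ℝ} [IsProbabilityMeasure μ]

lemma prop_P1 (hFsub : F ⊆ Set.Icc 0 1) (hsupp : HasSupport μ F)
    {lam a : ℝ} (hlam0 : 0 < lam) (hlam1 : lam ≤ 1) (hlac : Lacunary c lam)
    (ha : 2 / lam ≤ a) (q β ε : ℝ) (hε : 0 < ε)
    (hβ : Filter.Tendsto
      (fun N : ℕ =>
        (∑ n ∈ Finset.range N, (μ (c.I a n)).toReal ^ q * c.len n ^ β) / Real.log N)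
      Filter.atTop (nhds 0)) :
    Filter.Tendsto (fun R => R ^ (β + ε) * gridSum μ a q R)
      (nhdsWithin 0 (Set.Ioi 0)) (nhds 0) := by
  obtain ⟨w, W, K, R₀, hw, hW, hR₀, hK, hkey⟩ := key1 c hFsub hsupp hlam0 hlam1 hlac ha q
  set t : ℕ → ℝ := fun n => (μ (c.I a n)).toReal ^ q with ht
  have htn : ∀ n, 0 ≤ t n := fun n => Real.rpow_nonneg ENNReal.toReal_nonneg q
  set S : ℕ → ℝ := fun N => ∑ n ∈ Finset.range N, t n * c.len n ^ β with hS
  set M : ℝ → ℕ := fun R => ⌈1/(w*R)⌉₊ with hM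
  set Cw : ℝ := max (w ^ (-β)) (W ^ (-β)) with hCw
  have hCw0 : 0 < Cw := lt_max_of_lt_left (Real.rpow_pos_of_pos hw _)
  have hbound : ∀ R, 0 < R → R ≤ R₀ →
      R ^ (β + ε) * gridSum μ a q R ≤ K * Cw * (R ^ ε * S (M R)) := by
    intro R hR hRle
    have h2 : ∑ n ∈ (Finset.range ⌈1/(w*R)⌉₊).filter
        (fun n => w*R ≤ c.len n ∧ c.len n ≤ W*R), t n ≤ Cw * R^(-β) * S (M R) := by
      have hperterm : ∀ n ∈ (Finset.range ⌈1/(w*R)⌉₊).filter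
          (fun n => w*R ≤ c.len n ∧ c.len n ≤ W*R),
          t n ≤ (Cw * R^(-β)) * (t n * c.len n ^ β) := by
        intro n hn
        obtain ⟨_, hf1, hf2⟩ := Finset.mem_filter.1 hn
        have hlen0 : 0 < c.len n := c.len_pos n
        have e1 : t n = (t n * c.len n ^ β) * c.len n ^ (-β) := by
          rw [mul_assoc, ← Real.rpow_add hlen0, add_neg_cancel, Real.rpow_zero, mul_one]
        have e2 : c.len n ^ (-β) ≤ Cw * R^(-β) := rpow_scaled_le hw hW hR hf1 hf2
        calc t n = (t n * c.len n ^ β) * c.len n ^ (-β) := e1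
          _ ≤ (t n * c.len n ^ β) * (Cw * R^(-β)) := by
            refine mul_le_mul_of_nonneg_left e2 ?_
            exact mul_nonneg (htn n) (Real.rpow_nonneg hlen0.le β)
          _ = (Cw * R^(-β)) * (t n * c.len n ^ β) := by ring
      calc ∑ n ∈ (Finset.range ⌈1/(w*R)⌉₊).filter
            (fun n => w*R ≤ c.len n ∧ c.len n ≤ W*R), t n
          ≤ ∑ n ∈ (Finset.range ⌈1/(w*R)⌉₊).filter
            (fun n => w*R ≤ c.len n ∧ c.len n ≤ W*R), (Cw * R^(-β)) * (t n * c.len n ^ β) :=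
            Finset.sum_le_sum hperterm
        _ = (Cw * R^(-β)) * ∑ n ∈ (Finset.range ⌈1/(w*R)⌉₊).filter
            (fun n => w*R ≤ c.len n ∧ c.len n ≤ W*R), (t n * c.len n ^ β) := by
            rw [Finset.mul_sum]
        _ ≤ (Cw * R^(-β)) * S (M R) := by
            refine mul_le_mul_of_nonneg_left ?_ (by positivity)
            refine Finset.sum_le_sum_of_subset_of_nonneg (Finset.filter_subset _ _) ?_
            intro n _ _
            exact mul_nonneg (htn n) (Real.rpow_nonneg (c.len_pos n).le β)
    have h1 := hkey R hR hRle
    have hchain : gridSum μ a q R ≤ K * (Cw * R^(-β) * S (M R)) :=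
      le_trans h1 (mul_le_mul_of_nonneg_left h2 hK)
    have hrw : R^(β+ε) * (K * (Cw * R^(-β) * S (M R))) = K * Cw * (R^ε * S (M R)) := by
      have rε : R ^ (β+ε) * R^(-β) = R^ε := by
        rw [← Real.rpow_add hR]; ring_nf
      calc R^(β+ε) * (K * (Cw * R^(-β) * S (M R)))
          = K * Cw * ((R^(β+ε) * R^(-β)) * S (M R)) := by ring
        _ = K * Cw * (R^ε * S (M R)) := by rw [rε]
    calc R ^ (β + ε) * gridSum μ a q R
        ≤ R^(β+ε) * (K * (Cw * R^(-β) * S (M R))) :=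
          mul_le_mul_of_nonneg_left hchain (Real.rpow_nonneg hR.le _)
      _ = K * Cw * (R^ε * S (M R)) := hrw
  -- limit machinery
  have hMtendsto : Filter.Tendsto M (nhdsWithin 0 (Set.Ioi 0)) Filter.atTop := by
    have h2 : Filter.Tendsto (fun R : ℝ => 1/R) (nhdsWithin 0 (Set.Ioi 0)) Filter.atTop := by
      simpa [one_div] using tendsto_inv_nhdsGT_zero
    have h1 : Filter.Tendsto (fun R : ℝ => 1/(w*R)) (nhdsWithin 0 (Set.Ioi 0))
        Filter.atTop := by
      have h3 := Filter.Tendsto.const_mul_atTop (show (0:ℝ) < 1/w by positivity) h2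
      refine h3.congr fun R => ?_
      field_simp
    refine Filter.tendsto_atTop.2 fun b => ?_
    filter_upwards [h1.eventually_ge_atTop (b:ℝ)] with R hRb
    have := le_trans hRb (Nat.le_ceil (1/(w*R)))
    exact_mod_cast this
  have factor1 : Filter.Tendsto (fun R => S (M R) / Real.log (M R))
      (nhdsWithin 0 (Set.Ioi 0)) (nhds 0) := hβ.comp hMtendsto
  have factor2 : Filter.Tendsto (fun R => R^ε * Real.log (M R))
      (nhdsWithin 0 (Set.Ioi 0)) (nhds 0) := by
    have hh : Filter.Tendsto (fun R : ℝ => R^ε * (Real.log 2 - Real.log w - Real.log R))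
        (nhdsWithin 0 (Set.Ioi 0)) (nhds 0) := by
      have t1 := tendsto_rpow_nhdsWithin_zero hε
      have t2 := tendsto_log_mul_rpow_nhdsGT_zero hε
      have := ((t1.const_mul (Real.log 2 - Real.log w)).sub t2)
      simp only [mul_zero, sub_zero, zero_sub, neg_zero] at this
      refine this.congr fun R => ?_
      ring
    have hlow : ∀ᶠ R in nhdsWithin 0 (Set.Ioi 0), 0 ≤ R^ε * Real.log (M R) := by
      filter_upwards [self_mem_nhdsWithin] with R (hR : (0:ℝ) < R)
      have hM1 : 1 ≤ M R := Nat.one_le_ceil_iff.2 (by positivity)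
      have : (1:ℝ) ≤ (M R : ℝ) := by exact_mod_cast hM1
      exact mul_nonneg (Real.rpow_nonneg hR.le ε) (Real.log_nonneg this)
    have hup : ∀ᶠ R in nhdsWithin 0 (Set.Ioi 0),
        R^ε * Real.log (M R) ≤ R^ε * (Real.log 2 - Real.log w - Real.log R) := by
      have hev : ∀ᶠ R in nhdsWithin 0 (Set.Ioi 0), R < 1/w := by
        refine eventually_nhdsWithin_of_eventually_nhds ?_
        exact gt_mem_nhds (by positivity)
      filter_upwards [self_mem_nhdsWithin, hev] with R (hR : (0:ℝ) < R) hRw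
      have hwR : 0 < w * R := by positivity
      have hge1 : (1:ℝ) ≤ 1/(w*R) := by
        rw [le_div_iff₀ hwR]
        rw [lt_div_iff₀ hw] at hRw
        nlinarith
      have hMle : (M R : ℝ) ≤ 2/(w*R) := by
        have hc := Nat.ceil_lt_add_one (show (0:ℝ) ≤ 1/(w*R) by positivity)
        have h2 : 1/(w*R) + 1 ≤ 2/(w*R) := by
          have he : 2/(w*R) = 1/(w*R) + 1/(w*R) := by ring
          linarith
        exact le_trans hc.le h2
      have hM1 : (1:ℝ) ≤ (M R : ℝ) := by
        exact_mod_cast Nat.one_le_ceil_iff.2 (show 0 < 1/(w*R) by positivity)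
      have hloglog : Real.log (M R) ≤ Real.log 2 - Real.log w - Real.log R := by
        calc Real.log (M R) ≤ Real.log (2/(w*R)) := Real.log_le_log (by linarith) hMle
          _ = Real.log 2 - Real.log (w*R) := Real.log_div (by norm_num) (ne_of_gt hwR)
          _ = Real.log 2 - Real.log w - Real.log R := by
              rw [Real.log_mul (ne_of_gt hw) (ne_of_gt hR)]; ring
      exact mul_le_mul_of_nonneg_left hloglog (Real.rpow_nonneg hR.le ε)
    exact squeeze_zero' hlow hup hh
  have hprod : Filter.Tendsto
      (fun R => K * Cw * ((S (M R) / Real.log (M R)) * (R^ε * Real.log (M R))))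
      (nhdsWithin 0 (Set.Ioi 0)) (nhds 0) := by
    have := (factor1.mul factor2).const_mul (K * Cw)
    simpa using this
  refine squeeze_zero' ?_ ?_ hprod
  · filter_upwards [self_mem_nhdsWithin] with R (hR : (0:ℝ) < R)
    exact mul_nonneg (Real.rpow_nonneg hR.le _) (gridSum_nonneg μ a q R)
  · have hev : ∀ᶠ R in nhdsWithin 0 (Set.Ioi 0), R < R₀ :=
      eventually_nhdsWithin_of_eventually_nhds (gt_mem_nhds hR₀)
    filter_upwards [self_mem_nhdsWithin, hev, hMtendsto.eventually_ge_atTop 2]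
      with R (hR : (0:ℝ) < R) hRle hM2
    have hM2' : (2:ℝ) ≤ (M R : ℝ) := by exact_mod_cast hM2
    have hlogpos : 0 < Real.log (M R) := Real.log_pos (by linarith)
    calc R ^ (β + ε) * gridSum μ a q R ≤ K * Cw * (R^ε * S (M R)) :=
          hbound R hR hRle.le
      _ = K * Cw * ((S (M R) / Real.log (M R)) * (R^ε * Real.log (M R))) := by
          field_simp
  
end P1
lemma pow_rpow_comm (x : ℝ) (hx : 0 ≤ x) (k : ℕ) (ε : ℝ) : (x^k)^ε = (x^ε)^k := by
  rw [← Real.rpow_natCast x k, ← Real.rpow_mul hx, mul_comm, Real.rpow_mul hx,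
    Real.rpow_natCast]

section P2

variable {F : Set ℝ} (c : FractalComplement F) {μ : Measure ℝ} [IsProbabilityMeasure μ]

lemma prop_P2 (hFsub : F ⊆ Set.Icc 0 1) (hsupp : HasSupport μ F) {a : ℝ} (ha2 : 2 ≤ a)
    (q β ε : ℝ) (hε : 0 < ε)
    (hβ : Filter.Tendsto (fun R => R ^ β * gridSum μ a q R)
      (nhdsWithin 0 (Set.Ioi 0)) (nhds 0)) :
    Filter.Tendsto
      (fun N : ℕ =>
        (∑ n ∈ Finset.range N, (μ (c.I a n)).toReal ^ q * c.len n ^ (β + ε)) / Real.log N)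
      Filter.atTop (nhds 0) := by
  obtain ⟨cw, K, hcw, hK, hkey⟩ := key2 c hFsub hsupp ha2 q
  set t : ℕ → ℝ := fun n => (μ (c.I a n)).toReal ^ q with ht
  have htn : ∀ n, 0 ≤ t n := fun n => Real.rpow_nonneg ENNReal.toReal_nonneg q
  -- boundedness of R^β gridSum near 0
  have hev : ∀ᶠ R in nhdsWithin 0 (Set.Ioi 0), R ^ β * gridSum μ a q R < 1 :=
    hβ.eventually (gt_mem_nhds one_pos)
  rw [eventually_nhdsWithin_iff, Metric.eventually_nhds_iff] at hev
  obtain ⟨δ, hδpos, hδ⟩ := hev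
  set ρ0 := δ/2 with hρ0
  have hρ0pos : 0 < ρ0 := by positivity
  have hδ' : ∀ R : ℝ, 0 < R → R ≤ ρ0 → R ^ β * gridSum μ a q R ≤ 1 := by
    intro R h1 h2
    refine (hδ ?_ h1).le
    rw [Real.dist_eq, sub_zero, abs_of_pos h1]
    rw [hρ0] at h2; linarith
  -- the level function
  set κ : ℕ → ℕ := fun n => (-(Int.log 2 (c.len n / (cw * ρ0)) + 1)).toNat with hκ
  set Rk : ℕ → ℝ := fun k => ρ0 / 2^(k+1) with hRk
  have hRkpos : ∀ k, 0 < Rk k := fun k => by rw [hRk]; positivity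
  have h2pow : ∀ k : ℕ, (1:ℝ) ≤ 2^k := fun k => one_le_pow₀ (by norm_num)
  have hRkle : ∀ k, Rk k ≤ ρ0 := by
    intro k
    rw [hRk]
    exact div_le_self hρ0pos.le (h2pow (k+1))
  have hlevel : ∀ n, c.len n < cw * ρ0 →
      cw * Rk (κ n) ≤ c.len n ∧ c.len n ≤ 2 * cw * Rk (κ n) := by
    intro n h1
    have h0 := c.len_pos n
    set y := c.len n / (cw * ρ0) with hy
    have hy0 : 0 < y := by rw [hy]; positivity
    have hy1 : y < 1 := by rw [hy, div_lt_one (by positivity)]; exact h1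
    set j := Int.log 2 y with hj
    have hj1 : (2:ℝ)^j ≤ y := Int.zpow_log_le_self (by norm_num) hy0
    have hj2 : y < (2:ℝ)^(j+1) := Int.lt_zpow_succ_log_self (by norm_num) y
    have hjneg : j + 1 ≤ 0 := by
      by_contra h
      push_neg at h
      have h3 : (0:ℤ) ≤ j := by omega
      have h4 : (1:ℝ) ≤ (2:ℝ)^j := one_le_zpow₀ (by norm_num) h3
      linarith
    have hκz : (κ n : ℤ) = -(j+1) := by
      rw [hκ]
      simp only []
      rw [← hy, ← hj]
      exact Int.toNat_of_nonneg (by omega)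
    have e1 : (2:ℝ)^j = ((2:ℝ)^(κ n + 1 : ℕ))⁻¹ := by
      have hje : j = -((κ n + 1 : ℕ) : ℤ) := by push_cast; omega
      rw [hje, zpow_neg, zpow_natCast]
    have e2 : (2:ℝ)^(j+1) = ((2:ℝ)^(κ n : ℕ))⁻¹ := by
      have hje : j + 1 = -((κ n : ℕ) : ℤ) := by push_cast; omega
      rw [hje, zpow_neg, zpow_natCast]
    have hcwρ : 0 < cw * ρ0 := by positivity
    have hyeq : c.len n = (cw * ρ0) * y := by rw [hy]; field_simp
    constructor
    · rw [hRk]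
      have : cw * (ρ0 / 2^(κ n + 1)) = (cw * ρ0) * ((2:ℝ)^(κ n + 1 : ℕ))⁻¹ := by
        field_simp
      rw [this, ← e1, hyeq]
      exact mul_le_mul_of_nonneg_left hj1 hcwρ.le
    · rw [hRk]
      have : 2 * cw * (ρ0 / 2^(κ n + 1)) = (cw * ρ0) * ((2:ℝ)^(κ n : ℕ))⁻¹ := by
        rw [pow_succ]
        field_simp
      rw [this, ← e2, hyeq]
      exact (mul_le_mul_of_nonneg_left hj2.le hcwρ.le)
  -- constants
  set Nbig := ⌈1/(cw*ρ0)⌉₊ with hNbig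
  set C₀ : ℝ := ∑ n ∈ Finset.range Nbig, t n * c.len n ^ (β+ε) with hC₀
  set Cm : ℝ := max (cw ^ (β+ε)) ((2*cw) ^ (β+ε)) with hCm
  have hCm0 : 0 < Cm := lt_max_of_lt_left (Real.rpow_pos_of_pos hcw _)
  set rr : ℝ := ((2:ℝ)^ε)⁻¹ with hrr
  have hrpow1 : (1:ℝ) < (2:ℝ)^ε := by
    rw [show (1:ℝ) = (2:ℝ)^(0:ℝ) by rw [Real.rpow_zero]]
    exact Real.rpow_lt_rpow_of_exponent_lt (by norm_num) hε
  have hrr0 : 0 ≤ rr := by rw [hrr]; positivity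
  have hrr1 : rr < 1 := by
    rw [hrr]
    exact inv_lt_one_of_one_lt₀ hrpow1
  have hRkε : ∀ k, (Rk k)^ε ≤ ρ0^ε * rr^k := by
    intro k
    rw [hRk]
    have h1 : (ρ0 / 2^(k+1))^ε = ρ0^ε / ((2:ℝ)^(k+1))^ε :=
      Real.div_rpow hρ0pos.le (show (0:ℝ) ≤ 2^(k+1) by positivity) ε
    rw [h1, pow_rpow_comm 2 (by norm_num)]
    rw [div_eq_mul_inv, ← inv_pow]
    rw [← hrr, pow_succ]
    have : ρ0^ε * (rr^k * rr) ≤ ρ0^ε * (rr^k * 1) := by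
      refine mul_le_mul_of_nonneg_left ?_ (Real.rpow_nonneg hρ0pos.le ε)
      exact mul_le_mul_of_nonneg_left hrr1.le (pow_nonneg hrr0 k)
    simpa using this
  -- uniform bound on partial sums
  set Cfull : ℝ := C₀ + Cm*K*ρ0^ε*(1-rr)⁻¹ with hCfull
  have hf0 : ∀ n, 0 ≤ t n * c.len n ^ (β+ε) :=
    fun n => mul_nonneg (htn n) (Real.rpow_nonneg (c.len_pos n).le _)
  have hSbound : ∀ N : ℕ, ∑ n ∈ Finset.range N, t n * c.len n ^ (β+ε) ≤ Cfull := by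
    intro N
    rw [← Finset.sum_filter_add_sum_filter_not (Finset.range N)
      (fun n => c.len n < cw*ρ0) (fun n => t n * c.len n ^ (β+ε))]
    have hbig : ∑ n ∈ (Finset.range N).filter (fun n => ¬ c.len n < cw*ρ0),
        t n * c.len n ^ (β+ε) ≤ C₀ := by
      refine Finset.sum_le_sum_of_subset_of_nonneg ?_ (fun n _ _ => hf0 n)
      intro n hn
      obtain ⟨_, hn2⟩ := Finset.mem_filter.1 hn
      push_neg at hn2
      exact Finset.mem_range.2 (c.index_lt (by positivity) hn2)
    have hsmall : ∑ n ∈ (Finset.range N).filter (fun n => c.len n < cw*ρ0),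
        t n * c.len n ^ (β+ε) ≤ Cm*K*ρ0^ε*(1-rr)⁻¹ := by
      set sm := (Finset.range N).filter (fun n => c.len n < cw*ρ0) with hsm
      rw [← Finset.sum_fiberwise_of_maps_to (fun n hn => Finset.mem_image_of_mem κ hn)
        (fun n => t n * c.len n ^ (β+ε))]
      have hfiber : ∀ k ∈ sm.image κ,
          ∑ n ∈ sm.filter (fun n => κ n = k), t n * c.len n ^ (β+ε)
            ≤ (Cm*K*ρ0^ε) * rr^k := by
        intro k _
        have hwindow : ∀ n ∈ sm.filter (fun n => κ n = k),
            cw * Rk k ≤ c.len n ∧ c.len n ≤ 2*cw* Rk k := by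
          intro n hn
          obtain ⟨hn1, hn2⟩ := Finset.mem_filter.1 hn
          have := hlevel n (Finset.mem_filter.1 hn1).2
          rw [hn2] at this
          exact this
        have hps : ∀ n ∈ sm.filter (fun n => κ n = k),
            t n * c.len n ^ (β+ε) ≤ (Cm * (Rk k)^(β+ε)) * t n := by
          intro n hn
          obtain ⟨h1, h2⟩ := hwindow n hn
          have := rpow_scaled_le hcw (by positivity : (0:ℝ) < 2*cw) (hRkpos k) h1 h2
            (p := β+ε)
          calc t n * c.len n ^ (β+ε) ≤ t n * (Cm * (Rk k)^(β+ε)) :=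
                mul_le_mul_of_nonneg_left this (htn n)
            _ = (Cm * (Rk k)^(β+ε)) * t n := by ring
        calc ∑ n ∈ sm.filter (fun n => κ n = k), t n * c.len n ^ (β+ε)
            ≤ ∑ n ∈ sm.filter (fun n => κ n = k), (Cm * (Rk k)^(β+ε)) * t n :=
              Finset.sum_le_sum hps
          _ = (Cm * (Rk k)^(β+ε)) * ∑ n ∈ sm.filter (fun n => κ n = k), t n := by
              rw [Finset.mul_sum]
          _ ≤ (Cm * (Rk k)^(β+ε)) * (K * gridSum μ a q (Rk k)) := by
              refine mul_le_mul_of_nonneg_left ?_ (by positivity)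
              exact hkey (Rk k) (hRkpos k) _ hwindow
          _ ≤ (Cm*K*ρ0^ε) * rr^k := by
              have hgrid0 := gridSum_nonneg μ a q (Rk k)
              have hb := hδ' (Rk k) (hRkpos k) (hRkle k)
              have hsplit : (Rk k)^(β+ε) = (Rk k)^ε * (Rk k)^β := by
                rw [← Real.rpow_add (hRkpos k)]; ring_nf
              have hε0 : 0 ≤ (Rk k)^ε := Real.rpow_nonneg (hRkpos k).le ε
              have step : (Rk k)^(β+ε) * gridSum μ a q (Rk k) ≤ (Rk k)^ε := by
                calc (Rk k)^(β+ε) * gridSum μ a q (Rk k)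
                    = (Rk k)^ε * ((Rk k)^β * gridSum μ a q (Rk k)) := by
                      rw [hsplit]; ring
                  _ ≤ (Rk k)^ε * 1 := mul_le_mul_of_nonneg_left hb hε0
                  _ = (Rk k)^ε := mul_one _
              calc (Cm * (Rk k)^(β+ε)) * (K * gridSum μ a q (Rk k))
                  = (Cm * K) * ((Rk k)^(β+ε) * gridSum μ a q (Rk k)) := by ring
                _ ≤ (Cm * K) * (Rk k)^ε := by
                    refine mul_le_mul_of_nonneg_left step (by positivity)
                _ ≤ (Cm * K) * (ρ0^ε * rr^k) := by
                    refine mul_le_mul_of_nonneg_left (hRkε k) (by positivity)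
                _ = (Cm*K*ρ0^ε) * rr^k := by ring
      calc ∑ k ∈ sm.image κ, ∑ n ∈ sm.filter (fun n => κ n = k), t n * c.len n ^ (β+ε)
          ≤ ∑ k ∈ sm.image κ, (Cm*K*ρ0^ε) * rr^k := Finset.sum_le_sum hfiber
        _ = (Cm*K*ρ0^ε) * ∑ k ∈ sm.image κ, rr^k := by rw [Finset.mul_sum]
        _ ≤ (Cm*K*ρ0^ε) * (1-rr)⁻¹ := by
            refine mul_le_mul_of_nonneg_left ?_ (by positivity)
            calc ∑ k ∈ sm.image κ, rr^k
                ≤ ∑' k : ℕ, rr^k := Summable.sum_le_tsum _ (fun k _ => pow_nonneg hrr0 k)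
                  (summable_geometric_of_lt_one hrr0 hrr1)
              _ = (1-rr)⁻¹ := tsum_geometric_of_lt_one hrr0 hrr1
        _ = Cm*K*ρ0^ε*(1-rr)⁻¹ := by ring
    rw [hCfull]
    linarith
  -- conclude
  have hlogN : Filter.Tendsto (fun N : ℕ => Real.log N) Filter.atTop Filter.atTop :=
    Real.tendsto_log_atTop.comp tendsto_natCast_atTop_atTop
  have hCtend : Filter.Tendsto (fun N : ℕ => Cfull / Real.log N) Filter.atTop (nhds 0) :=
    Filter.Tendsto.div_atTop tendsto_const_nhds hlogN
  refine squeeze_zero' ?_ ?_ hCtend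
  · filter_upwards [Filter.eventually_ge_atTop 2] with N hN
    have h2 : (1:ℝ) < (N:ℝ) := by exact_mod_cast Nat.lt_of_lt_of_le one_lt_two hN
    refine div_nonneg (Finset.sum_nonneg fun n _ => hf0 n) (Real.log_nonneg h2.le)
  · filter_upwards [Filter.eventually_ge_atTop 2] with N hN
    have h2 : (1:ℝ) < (N:ℝ) := by exact_mod_cast Nat.lt_of_lt_of_le one_lt_two hN
    have hlogpos : 0 < Real.log (N:ℝ) := Real.log_pos h2
    exact div_le_div_of_nonneg_right (hSbound N) hlogpos.le

end P2

/-- the moment function `β(q)` equals the infimum of those `β` for which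
`(Σ_{n<N} μ(Ī_n^a)^q |I_n|^β)/log N → 0` (equation (beta2) of Proposition 4.4; for these
nonnegative quantities, vanishing of the `limsup` is the same as convergence to `0`). -/
theorem stmt_12 (F : Set ℝ) (hF : IsFractalSubset F) (c : FractalComplement F)
    (lam : ℝ) (hlam0 : 0 < lam) (hlam1 : lam ≤ 1) (hlac : Lacunary c lam)
    (μ : Measure ℝ) [IsProbabilityMeasure μ] [NullSingletonClass μ] (hsupp : HasSupport μ F)
    (q a : ℝ) (ha : 2 / lam ≤ a) :
    betaA μ a q =
      sInf {β : ℝ | Filter.Tendsto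
        (fun N : ℕ =>
          (∑ n ∈ Finset.range N, (μ (c.I a n)).toReal ^ q * c.len n ^ β) / Real.log N)
        Filter.atTop (nhds 0)} := by
  have hFsub : F ⊆ Set.Icc 0 1 := hF.2.1
  have halam : 2 ≤ a * lam := by rwa [div_le_iff₀ hlam0] at ha
  have ha0 : 0 < a := by nlinarith
  have ha2 : 2 ≤ a := by nlinarith
  have hAB : ∀ β ∈ {β : ℝ | Filter.Tendsto (fun R => R ^ β * gridSum μ a q R)
      (nhdsWithin 0 (Set.Ioi 0)) (nhds 0)}, ∀ ε : ℝ, 0 < ε →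
      β + ε ∈ {β : ℝ | Filter.Tendsto
        (fun N : ℕ =>
          (∑ n ∈ Finset.range N, (μ (c.I a n)).toReal ^ q * c.len n ^ β) / Real.log N)
        Filter.atTop (nhds 0)} :=
    fun β hβ ε hε => prop_P2 c hFsub hsupp ha2 q β ε hε hβ
  have hBA : ∀ β ∈ {β : ℝ | Filter.Tendsto
      (fun N : ℕ =>
        (∑ n ∈ Finset.range N, (μ (c.I a n)).toReal ^ q * c.len n ^ β) / Real.log N)
      Filter.atTop (nhds 0)}, ∀ ε : ℝ, 0 < ε →
      β + ε ∈ {β : ℝ | Filter.Tendsto (fun R => R ^ β * gridSum μ a q R)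
        (nhdsWithin 0 (Set.Ioi 0)) (nhds 0)} :=
    fun β hβ ε hε => prop_P1 c hFsub hsupp hlam0 hlam1 hlac ha q β ε hε hβ
  exact le_antisymm (Real.sInf_le_sInf_of_shift hBA hAB)
    (Real.sInf_le_sInf_of_shift hAB hBA)
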